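/- arXiv:2510.25354 — 2 statements merged into one kernel-verified Lean document; each statement's English description precedes it below -/
import Mathlib

section
/- Let u ∈ C³(ℝ^d), p ∈ {2} ∪ [3,∞), and ψ(t) = |t|^{p−2}t. Then there exists a constant C depending only on p and d such that for all x, z ∈ ℝ^d, |ψ(u(x+z) − u(x)) − |∇u(x)·z|^{p−2} ∇u(x)·z − ((p−1)/2) |∇u(x)·z|^{p−2} zᵀ∇²u(x)z| ≤ C ‖u‖_{C³}^{p−1} |z|^{p+1}. -/
open Set Filter

section helpers
variable {E : Type*} [NormedAddCommGroup E] [NormedSpace ℝ E]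

lemma line_hasDerivAt (x z : E) (t : ℝ) : HasDerivAt (fun t : ℝ => x + t • z) z t := by
  simpa using ((hasDerivAt_id t).smul_const z).const_add x

lemma mvt01 {f f' : ℝ → ℝ} (hf : ∀ t, HasDerivAt f (f' t) t) {K : ℝ}
    (hK : ∀ t ∈ Icc (0:ℝ) 1, |f' t| ≤ K) : ∀ t ∈ Icc (0:ℝ) 1, |f t - f 0| ≤ K := by
  intro t ht
  have hK0 : 0 ≤ K := le_trans (abs_nonneg _) (hK 0 ⟨le_rfl, zero_le_one⟩)
  have := (convex_Icc (0:ℝ) 1).norm_image_sub_le_of_norm_hasDerivWithin_le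
    (fun s hs => (hf s).hasDerivWithinAt) (fun s hs => by simpa using hK s hs)
    (⟨le_rfl, zero_le_one⟩ : (0:ℝ) ∈ Icc (0:ℝ) 1) ht
  rw [Real.norm_eq_abs, Real.norm_eq_abs, sub_zero] at this
  calc |f t - f 0| ≤ K * |t| := this
    _ ≤ K * 1 := by
        apply mul_le_mul_of_nonneg_left _ hK0
        rw [abs_of_nonneg ht.1]; exact ht.2
    _ = K := mul_one K

/-- quantitative second-order Taylor with global bound on third derivative -/
lemma taylor2 (u : E → ℝ) (hu : ContDiff ℝ 3 u) (M : ℝ)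
    (h3 : ∀ y, ‖iteratedFDeriv ℝ 3 u y‖ ≤ M) (x z : E) :
    |u (x + z) - u x - fderiv ℝ u x z - (1/2) * iteratedFDeriv ℝ 2 u x ![z, z]| ≤ M * ‖z‖ ^ 3 := by
  set L : ℝ → E := fun t => x + t • z with hL
  have hu1 : Differentiable ℝ u := hu.differentiable (by norm_num)
  have hu2 : ContDiff ℝ 2 (fderiv ℝ u) := hu.fderiv_right (by norm_num)
  have hu3 : ContDiff ℝ 1 (fderiv ℝ (fderiv ℝ u)) := hu2.fderiv_right (by norm_num)
  -- first derivative along line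
  have hg : ∀ t, HasDerivAt (fun t => u (L t)) (fderiv ℝ u (L t) z) t := fun t =>
    (hu1 (L t)).hasFDerivAt.comp_hasDerivAt t (line_hasDerivAt x z t)
  -- second
  have hφ : ∀ t, HasDerivAt (fun t => fderiv ℝ u (L t) z)
      (fderiv ℝ (fderiv ℝ u) (L t) z z) t := by
    intro t
    have h1 : HasDerivAt (fun t => fderiv ℝ u (L t)) (fderiv ℝ (fderiv ℝ u) (L t) z) t :=
      ((hu2.differentiable (by norm_num)) (L t)).hasFDerivAt.comp_hasDerivAt t
        (line_hasDerivAt x z t)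
    simpa using h1.clm_apply (hasDerivAt_const t z)
  -- third
  have hψ : ∀ t, HasDerivAt (fun t => fderiv ℝ (fderiv ℝ u) (L t) z z)
      (fderiv ℝ (fderiv ℝ (fderiv ℝ u)) (L t) z z z) t := by
    intro t
    have h1 : HasDerivAt (fun t => fderiv ℝ (fderiv ℝ u) (L t))
        (fderiv ℝ (fderiv ℝ (fderiv ℝ u)) (L t) z) t :=
      ((hu3.differentiable (by norm_num)) (L t)).hasFDerivAt.comp_hasDerivAt t (line_hasDerivAt x z t)
    simpa using (h1.clm_apply (hasDerivAt_const t z)).clm_apply (hasDerivAt_const t z)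
  -- bound on third derivative
  have h3b : ∀ t : ℝ, |fderiv ℝ (fderiv ℝ (fderiv ℝ u)) (L t) z z z| ≤ M * ‖z‖ ^ 3 := by
    intro t
    letI : NormedAddCommGroup (E →L[ℝ] E →L[ℝ] ℝ) := ContinuousLinearMap.toNormedAddCommGroup
    letI : NormedSpace ℝ (E →L[ℝ] E →L[ℝ] ℝ) := ContinuousLinearMap.toNormedSpace
    have hnorm : ‖fderiv ℝ (fderiv ℝ (fderiv ℝ u)) (L t)‖ = ‖iteratedFDeriv ℝ 3 u (L t)‖ :=
      calc ‖fderiv ℝ (fderiv ℝ (fderiv ℝ u)) (L t)‖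
          = ‖iteratedFDeriv ℝ 0 (fderiv ℝ (fderiv ℝ (fderiv ℝ u))) (L t)‖ :=
            (norm_iteratedFDeriv_zero (f := fderiv ℝ (fderiv ℝ (fderiv ℝ u))) (x := L t)).symm
        _ = ‖iteratedFDeriv ℝ 1 (fderiv ℝ (fderiv ℝ u)) (L t)‖ :=
            norm_iteratedFDeriv_fderiv (n := 0)
        _ = ‖iteratedFDeriv ℝ 2 (fderiv ℝ u) (L t)‖ := norm_iteratedFDeriv_fderiv (n := 1)
        _ = ‖iteratedFDeriv ℝ 3 u (L t)‖ := norm_iteratedFDeriv_fderiv (n := 2)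
    calc |fderiv ℝ (fderiv ℝ (fderiv ℝ u)) (L t) z z z|
        ≤ ‖fderiv ℝ (fderiv ℝ (fderiv ℝ u)) (L t) z z‖ * ‖z‖ :=
          (fderiv ℝ (fderiv ℝ (fderiv ℝ u)) (L t) z z).le_opNorm z
      _ ≤ (‖fderiv ℝ (fderiv ℝ (fderiv ℝ u)) (L t) z‖ * ‖z‖) * ‖z‖ := by
          gcongr; exact (fderiv ℝ (fderiv ℝ (fderiv ℝ u)) (L t) z).le_opNorm z
      _ ≤ ((‖fderiv ℝ (fderiv ℝ (fderiv ℝ u)) (L t)‖ * ‖z‖) * ‖z‖) * ‖z‖ := by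
          gcongr; exact (fderiv ℝ (fderiv ℝ (fderiv ℝ u)) (L t)).le_opNorm z
      _ ≤ ((M * ‖z‖) * ‖z‖) * ‖z‖ := by
          gcongr; rw [hnorm]; exact h3 (L t)
      _ = M * ‖z‖ ^ 3 := by ring
  set K : ℝ := M * ‖z‖ ^ 3 with hK
  -- step 1: ψ2 variation
  have s1 : ∀ t ∈ Icc (0:ℝ) 1,
      |fderiv ℝ (fderiv ℝ u) (L t) z z - fderiv ℝ (fderiv ℝ u) (L 0) z z| ≤ K :=
    mvt01 hψ (fun t _ => h3b t)
  -- step 2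
  have s2 : ∀ t ∈ Icc (0:ℝ) 1,
      |(fderiv ℝ u (L t) z - fderiv ℝ u (L 0) z - t * (fderiv ℝ (fderiv ℝ u) (L 0) z z))| ≤ K := by
    have hd : ∀ t, HasDerivAt
        (fun t => fderiv ℝ u (L t) z - fderiv ℝ u (L 0) z - t * (fderiv ℝ (fderiv ℝ u) (L 0) z z))
        (fderiv ℝ (fderiv ℝ u) (L t) z z - fderiv ℝ (fderiv ℝ u) (L 0) z z) t := fun t =>
      ((hφ t).sub_const _).sub (hasDerivAt_mul_const _)
    have := mvt01 hd s1
    intro t ht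
    simpa using this t ht
  -- step 3
  have s3 : ∀ t ∈ Icc (0:ℝ) 1,
      |(u (L t) - u (L 0) - t * (fderiv ℝ u (L 0) z)
        - (t^2/2) * (fderiv ℝ (fderiv ℝ u) (L 0) z z))| ≤ K := by
    have hd : ∀ t, HasDerivAt
        (fun t => u (L t) - u (L 0) - t * (fderiv ℝ u (L 0) z)
          - (t^2/2) * (fderiv ℝ (fderiv ℝ u) (L 0) z z))
        (fderiv ℝ u (L t) z - fderiv ℝ u (L 0) z - t * (fderiv ℝ (fderiv ℝ u) (L 0) z z)) t := by
      intro t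
      have hq : HasDerivAt (fun t : ℝ => (t^2/2) * (fderiv ℝ (fderiv ℝ u) (L 0) z z))
          (t * (fderiv ℝ (fderiv ℝ u) (L 0) z z)) t := by
        have := ((hasDerivAt_pow 2 t).div_const 2).mul_const (fderiv ℝ (fderiv ℝ u) (L 0) z z)
        refine this.congr_deriv ?_
        ring
      exact (((hg t).sub_const _).sub (hasDerivAt_mul_const _)).sub hq
    have := mvt01 hd s2
    intro t ht
    simpa using this t ht
  have L1 : L 1 = x + z := by simp [hL]
  have L0 : L 0 = x := by simp [hL]
  have key := s3 1 ⟨zero_le_one, le_rfl⟩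
  rw [L1, L0] at key
  have h2eq : iteratedFDeriv ℝ 2 u x ![z, z] = fderiv ℝ (fderiv ℝ u) x z z := by
    rw [iteratedFDeriv_two_apply]
    simp
  rw [h2eq]
  simpa using key
end helpers

lemma hasDerivAt_psi (p : ℝ) (hp : 3 ≤ p) (t : ℝ) :
    HasDerivAt (fun s : ℝ => |s| ^ (p - 2) * s) ((p - 1) * |t| ^ (p - 2)) t := by
  rcases lt_trichotomy t 0 with ht | ht | ht
  · have h1 : HasDerivAt (fun s : ℝ => (-s) ^ (p - 2) * s)
        (-1 * (p - 2) * (-t) ^ (p - 2 - 1) * t + (-t) ^ (p - 2) * 1) t := by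
      simpa [Pi.mul_def] using (((hasDerivAt_id t).neg).rpow_const (p := p - 2)
        (Or.inr (by linarith))).mul (hasDerivAt_id t)
    have heq : (fun s : ℝ => |s| ^ (p - 2) * s) =ᶠ[nhds t] fun s : ℝ => (-s) ^ (p - 2) * s := by
      filter_upwards [Iio_mem_nhds ht] with s hs
      rw [abs_of_neg hs]
    have hval : -1 * (p - 2) * (-t) ^ (p - 2 - 1) * t + (-t) ^ (p - 2) * 1
        = (p - 1) * |t| ^ (p - 2) := by
      rw [abs_of_neg ht]
      have hpos : (0:ℝ) < -t := by linarith
      have h2 : (-t) ^ (p - 2 - 1) * (-t) = (-t) ^ (p - 2) := by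
        rw [← Real.rpow_add_one hpos.ne']
        ring_nf
      nlinarith [h2]
    exact (hval ▸ h1).congr_of_eventuallyEq heq
  · subst ht
    rw [hasDerivAt_iff_tendsto_slope]
    have hz : |(0:ℝ)| ^ (p - 2) = 0 := by
      rw [abs_zero, Real.zero_rpow (by linarith)]
    rw [hz, mul_zero]
    have heq : slope (fun s : ℝ => |s| ^ (p - 2) * s) 0 =ᶠ[nhdsWithin 0 {(0:ℝ)}ᶜ]
        fun s => |s| ^ (p - 2) := by
      filter_upwards [self_mem_nhdsWithin] with s hs
      have hs' : (s : ℝ) ≠ 0 := hs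
      simp only [slope, sub_zero, vsub_eq_sub, smul_eq_mul, hz, zero_mul, mul_zero]
      field_simp
    rw [Filter.tendsto_congr' heq]
    have hcont : ContinuousAt (fun s : ℝ => |s| ^ (p - 2)) 0 :=
      ContinuousAt.rpow_const continuous_abs.continuousAt (Or.inr (by linarith))
    have htend : Filter.Tendsto (fun s : ℝ => |s| ^ (p - 2)) (nhds 0) (nhds 0) := by
      simpa [Real.zero_rpow (show p - 2 ≠ 0 by linarith)] using hcont.tendsto
    exact tendsto_nhdsWithin_of_tendsto_nhds htend
  · have h1 : HasDerivAt (fun s : ℝ => s ^ (p - 2) * s)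
        (1 * (p - 2) * t ^ (p - 2 - 1) * t + t ^ (p - 2) * 1) t := by
      simpa [Pi.mul_def] using ((hasDerivAt_id t).rpow_const (p := p - 2)
        (Or.inr (by linarith))).mul (hasDerivAt_id t)
    have heq : (fun s : ℝ => |s| ^ (p - 2) * s) =ᶠ[nhds t] fun s : ℝ => s ^ (p - 2) * s := by
      filter_upwards [Ioi_mem_nhds ht] with s hs
      rw [abs_of_pos hs]
    have hval : 1 * (p - 2) * t ^ (p - 2 - 1) * t + t ^ (p - 2) * 1
        = (p - 1) * |t| ^ (p - 2) := by
      rw [abs_of_pos ht]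
      have h2 : t ^ (p - 2 - 1) * t = t ^ (p - 2) := by
        rw [← Real.rpow_add_one ht.ne']
        ring_nf
      nlinarith [h2]
    exact (hval ▸ h1).congr_of_eventuallyEq heq

lemma rpow_lip {q R : ℝ} (hq : 1 ≤ q) {s t : ℝ} (hs : s ∈ Icc 0 R) (ht : t ∈ Icc 0 R) :
    |t ^ q - s ^ q| ≤ q * R ^ (q - 1) * |t - s| := by
  have hmvt := (convex_Icc (0:ℝ) R).norm_image_sub_le_of_norm_hasDerivWithin_le
    (f := fun x : ℝ => x ^ q) (f' := fun x : ℝ => q * x ^ (q - 1))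
    (fun x _ => (Real.hasDerivAt_rpow_const (Or.inr hq)).hasDerivWithinAt)
    (fun x hx => by
      show ‖q * x ^ (q - 1)‖ ≤ q * R ^ (q - 1)
      rw [Real.norm_eq_abs,
        abs_of_nonneg (mul_nonneg (by linarith) (Real.rpow_nonneg hx.1 _))]
      exact mul_le_mul_of_nonneg_left (Real.rpow_le_rpow hx.1 hx.2 (by linarith)) (by linarith))
    hs ht
  simpa [Real.norm_eq_abs] using hmvt

lemma psi_taylor (p : ℝ) (hp : 3 ≤ p) (a h : ℝ) :
    |(|a + h| ^ (p - 2) * (a + h)) - |a| ^ (p - 2) * a - (p - 1) * |a| ^ (p - 2) * h|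
      ≤ (p - 1) * ((p - 2) * (2 ^ (p - 3) * (|a| ^ (p - 3) + |h| ^ (p - 3)))) * h ^ 2 := by
  rcases eq_or_ne h 0 with rfl | hh
  · simp
  set ψ : ℝ → ℝ := fun s => |s| ^ (p - 2) * s with hψ
  have hmin : min a (a + h) < max a (a + h) := by
    rcases lt_or_gt_of_ne hh with h1 | h1
    · rw [min_eq_right (by linarith), max_eq_left (by linarith)]; linarith
    · rw [min_eq_left (by linarith), max_eq_right (by linarith)]; linarith
  obtain ⟨ξ, hξ, hslope⟩ := exists_hasDerivAt_eq_slope ψ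
    (fun s => (p - 1) * |s| ^ (p - 2)) hmin
    (fun s _ => (hasDerivAt_psi p hp s).continuousAt.continuousWithinAt)
    (fun s _ => hasDerivAt_psi p hp s)
  have hslope' : ψ (a + h) - ψ a = (p - 1) * |ξ| ^ (p - 2) * h := by
    rcases lt_or_gt_of_ne hh with h1 | h1
    · rw [min_eq_right (by linarith), max_eq_left (by linarith),
        show a - (a + h) = -h by ring, eq_div_iff (neg_ne_zero.mpr hh)] at hslope
      linarith
    · rw [min_eq_left (by linarith), max_eq_right (by linarith),
        show a + h - a = h by ring, eq_div_iff hh] at hslope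
      linarith
  have hξa : |ξ - a| ≤ |h| := by
    rcases lt_or_gt_of_ne hh with h1 | h1
    · rw [min_eq_right (by linarith), max_eq_left (by linarith)] at hξ
      rw [abs_of_neg h1, abs_of_nonpos (by linarith [hξ.2])]
      linarith [hξ.1]
    · rw [min_eq_left (by linarith), max_eq_right (by linarith)] at hξ
      rw [abs_of_pos h1, abs_of_nonneg (by linarith [hξ.1])]
      linarith [hξ.2]
  have hξbound : |ξ| ≤ |a| + |h| := by
    have : |ξ| = |a + (ξ - a)| := by congr 1; ring
    rw [this]
    calc |a + (ξ - a)| ≤ |a| + |ξ - a| := abs_add_le _ _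
      _ ≤ |a| + |h| := by linarith
  have hlip : |(|ξ| ^ (p - 2) - |a| ^ (p - 2))| ≤ (p - 2) * (|a| + |h|) ^ (p - 3) * |h| := by
    have key := rpow_lip (q := p - 2) (R := |a| + |h|) (by linarith)
      (s := |a|) (t := |ξ|) ⟨abs_nonneg a, by linarith [abs_nonneg h]⟩ ⟨abs_nonneg ξ, hξbound⟩
    have habs : |(|ξ| - |a|)| ≤ |h| := le_trans (abs_abs_sub_abs_le_abs_sub ξ a) hξa
    rw [show p - 2 - 1 = p - 3 by ring] at key
    calc |(|ξ| ^ (p - 2) - |a| ^ (p - 2))|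
        ≤ (p - 2) * (|a| + |h|) ^ (p - 3) * |(|ξ| - |a|)| := key
      _ ≤ (p - 2) * (|a| + |h|) ^ (p - 3) * |h| := by
          apply mul_le_mul_of_nonneg_left habs
          have := Real.rpow_nonneg (by positivity : (0:ℝ) ≤ |a| + |h|) (p - 3)
          nlinarith
  have hsum : (|a| + |h|) ^ (p - 3) ≤ 2 ^ (p - 3) * (|a| ^ (p - 3) + |h| ^ (p - 3)) := by
    have h1 : |a| + |h| ≤ 2 * max |a| |h| := by
      have e1 := le_max_left |a| |h|
      have e2 := le_max_right |a| |h|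
      linarith
    have h2 : (max |a| |h|) ^ (p - 3) ≤ |a| ^ (p - 3) + |h| ^ (p - 3) := by
      rcases max_cases |a| |h| with ⟨hm, _⟩ | ⟨hm, _⟩
      · rw [hm]; linarith [Real.rpow_nonneg (abs_nonneg h) (p - 3)]
      · rw [hm]; linarith [Real.rpow_nonneg (abs_nonneg a) (p - 3)]
    calc (|a| + |h|) ^ (p - 3) ≤ (2 * max |a| |h|) ^ (p - 3) :=
          Real.rpow_le_rpow (by positivity) h1 (by linarith)
      _ = 2 ^ (p - 3) * (max |a| |h|) ^ (p - 3) := by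
          rw [Real.mul_rpow (by norm_num) (by positivity)]
      _ ≤ 2 ^ (p - 3) * (|a| ^ (p - 3) + |h| ^ (p - 3)) :=
          mul_le_mul_of_nonneg_left h2 (by positivity)
  have lhs_eq : ψ (a + h) - ψ a - (p - 1) * |a| ^ (p - 2) * h
      = (p - 1) * (|ξ| ^ (p - 2) - |a| ^ (p - 2)) * h := by
    rw [hslope']; ring
  calc |ψ (a + h) - ψ a - (p - 1) * |a| ^ (p - 2) * h|
      = (p - 1) * |(|ξ| ^ (p - 2) - |a| ^ (p - 2))| * |h| := by
        rw [lhs_eq, abs_mul, abs_mul, abs_of_nonneg (by linarith : (0:ℝ) ≤ p - 1)]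
    _ ≤ (p - 1) * ((p - 2) * (|a| + |h|) ^ (p - 3) * |h|) * |h| := by
        apply mul_le_mul_of_nonneg_right _ (abs_nonneg h)
        exact mul_le_mul_of_nonneg_left hlip (by linarith)
    _ = ((p - 1) * (p - 2) * |h| * |h|) * (|a| + |h|) ^ (p - 3) := by ring
    _ ≤ ((p - 1) * (p - 2) * |h| * |h|) * (2 ^ (p - 3) * (|a| ^ (p - 3) + |h| ^ (p - 3))) := by
        exact mul_le_mul_of_nonneg_left hsum
          (mul_nonneg (mul_nonneg (mul_nonneg (by linarith) (by linarith)) (abs_nonneg h))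
            (abs_nonneg h))
    _ = (p - 1) * ((p - 2) * (2 ^ (p - 3) * (|a| ^ (p - 3) + |h| ^ (p - 3))) * |h|) * |h| := by
        ring
    _ = (p - 1) * ((p - 2) * (2 ^ (p - 3) * (|a| ^ (p - 3) + |h| ^ (p - 3)))) * h ^ 2 := by
        rw [← sq_abs]; ring

set_option maxHeartbeats 1000000 in
/-- Let `u ∈ C³(ℝ^d)`, `p ∈ {2} ∪ [3,∞)` and `ψ(t) = |t|^{p−2} t`. There is a constant `C`
depending only on `p` and `d` such that for every `u` with `‖u‖_{C³} ≤ M` (all derivatives up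
to order 3 bounded by `M`) and all `x, z ∈ ℝ^d`,
`|ψ(u(x+z) − u(x)) − |∇u(x)·z|^{p−2} ∇u(x)·z − ((p−1)/2)|∇u(x)·z|^{p−2} zᵀ∇²u(x)z|`
`≤ C ‖u‖_{C³}^{p−1} |z|^{p+1}`. -/
theorem stmt8 {d : ℕ} (p : ℝ) (hp : p = 2 ∨ 3 ≤ p) :
    ∃ C : ℝ, 0 < C ∧
      ∀ (u : EuclideanSpace ℝ (Fin d) → ℝ) (M : ℝ),
        ContDiff ℝ 3 u →
        (∀ i : ℕ, i ≤ 3 → ∀ x, ‖iteratedFDeriv ℝ i u x‖ ≤ M) →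
        ∀ x z : EuclideanSpace ℝ (Fin d),
          |(|u (x + z) - u x| ^ (p - 2) * (u (x + z) - u x))
              - |fderiv ℝ u x z| ^ (p - 2) * (fderiv ℝ u x z)
              - ((p - 1) / 2) * |fderiv ℝ u x z| ^ (p - 2)
                  * iteratedFDeriv ℝ 2 u x ![z, z]|
            ≤ C * M ^ (p - 1) * ‖z‖ ^ (p + 1) := by
  rcases hp with rfl | hp3
  · -- p = 2
    refine ⟨1, one_pos, ?_⟩
    intro u M hu hM x z
    have hr := taylor2 u hu M (fun y => hM 3 le_rfl y) x z
    simp only [show (2:ℝ) - 2 = 0 by norm_num, Real.rpow_zero, one_mul,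
      show (2:ℝ) - 1 = 1 by norm_num, Real.rpow_one,
      show (2:ℝ) + 1 = ((3:ℕ):ℝ) by norm_num, Real.rpow_natCast, mul_one]
    convert hr using 3 <;> ring
  · -- 3 ≤ p
    set Kp : ℝ := (p - 1) * (p - 2) * 2 ^ (p - 3) with hKp
    have h2a : (0:ℝ) < 2 ^ (p - 3) := Real.rpow_pos_of_pos two_pos _
    have h2b : (0:ℝ) < 2 ^ (p - 1) := Real.rpow_pos_of_pos two_pos _
    have hKp0 : 0 ≤ Kp := by
      apply mul_nonneg (mul_nonneg (by linarith) (by linarith)) h2a.le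
    set C : ℝ := Kp * (4 + 2 ^ (p - 1)) + (p - 1) + 2 ^ (p - 1) + 1 + (p - 1) / 2 + 1 with hC
    have hCpos : 0 < C := by
      have : 0 ≤ Kp * (4 + 2 ^ (p - 1)) := mul_nonneg hKp0 (by linarith)
      have hp1 : (0:ℝ) ≤ p - 1 := by linarith
      simp only [hC]; linarith
    refine ⟨C, hCpos, ?_⟩
    intro u M hu hM x z
    have hM0 : 0 ≤ M := le_trans (norm_nonneg _) (hM 0 (by norm_num) x)
    set a : ℝ := fderiv ℝ u x z with haa
    set q : ℝ := iteratedFDeriv ℝ 2 u x ![z, z] with hqq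
    set b : ℝ := u (x + z) - u x with hbb
    -- basic bounds
    have hua : ∀ y, |u y| ≤ M := by
      intro y
      have := hM 0 (by norm_num) y
      rwa [norm_iteratedFDeriv_zero, Real.norm_eq_abs] at this
    have hb2M : |b| ≤ 2 * M := by
      rw [hbb]
      calc |u (x + z) - u x| ≤ |u (x + z)| + |u x| := abs_sub _ _
        _ ≤ 2 * M := by linarith [hua (x + z), hua x]
    have ha : |a| ≤ M * ‖z‖ := by
      have hfn : ‖fderiv ℝ u x‖ ≤ M := by
        have h1 : ‖fderiv ℝ u x‖ = ‖iteratedFDeriv ℝ 1 u x‖ := by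
          rw [← norm_iteratedFDeriv_fderiv (n := 0), norm_iteratedFDeriv_zero]
        rw [h1]; exact hM 1 (by norm_num) x
      calc |a| = ‖fderiv ℝ u x z‖ := rfl
        _ ≤ ‖fderiv ℝ u x‖ * ‖z‖ := (fderiv ℝ u x).le_opNorm z
        _ ≤ M * ‖z‖ := by gcongr
    have hq : |q| ≤ M * (‖z‖ * ‖z‖) := by
      calc |q| = ‖iteratedFDeriv ℝ 2 u x ![z, z]‖ := rfl
        _ ≤ ‖iteratedFDeriv ℝ 2 u x‖ * ∏ i, ‖(![z, z]) i‖ :=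
            (iteratedFDeriv ℝ 2 u x).le_opNorm _
        _ = ‖iteratedFDeriv ℝ 2 u x‖ * (‖z‖ * ‖z‖) := by
            rw [Fin.prod_univ_two]; simp
        _ ≤ M * (‖z‖ * ‖z‖) := by
            apply mul_le_mul_of_nonneg_right (hM 2 (by norm_num) x)
            positivity
    set r : ℝ := b - a - (1/2) * q with hrr
    have hr : |r| ≤ M * ‖z‖ ^ 3 := taylor2 u hu M (fun y => hM 3 le_rfl y) x z
    -- z = 0 case
    rcases eq_or_ne z 0 with rfl | hzne
    · have hz0 : ‖(0 : EuclideanSpace ℝ (Fin d))‖ = 0 := norm_zero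
      have ha0 : a = 0 := by
        rw [haa]; simp
      have hq0 : q = 0 := by
        rw [hqq]
        exact (iteratedFDeriv ℝ 2 u x).map_coord_zero (0 : Fin 2) rfl
      have hb0 : b = 0 := by rw [hbb]; simp
      rw [ha0, hq0, hb0]
      have hlhs : |(|(0:ℝ)| ^ (p - 2) * 0) - |(0:ℝ)| ^ (p - 2) * 0
          - (p - 1) / 2 * |(0:ℝ)| ^ (p - 2) * 0| = 0 := by simp
      rw [hlhs, hz0, Real.zero_rpow (by linarith : p + 1 ≠ 0), mul_zero]
    · have hz0 : 0 < ‖z‖ := norm_pos_iff.mpr hzne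
      -- target rewriting
      set ψb : ℝ := |b| ^ (p - 2) * b with hψb
      set h : ℝ := b - a with hhh
      have hEbd := psi_taylor p hp3 a h
      rw [show a + h = b by rw [hhh]; ring] at hEbd
      set Edef : ℝ := ψb - |a| ^ (p - 2) * a - (p - 1) * |a| ^ (p - 2) * h with hEdef
      have hsplit : ψb - |a| ^ (p - 2) * a - (p - 1) / 2 * |a| ^ (p - 2) * q
          = Edef + (p - 1) * |a| ^ (p - 2) * r := by
        rw [hEdef, hrr, hhh]; ring
      have habs : |ψb - |a| ^ (p - 2) * a - (p - 1) / 2 * |a| ^ (p - 2) * q|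
          ≤ |Edef| + (p - 1) * |a| ^ (p - 2) * |r| := by
        rw [hsplit]
        calc |Edef + (p - 1) * |a| ^ (p - 2) * r| ≤ |Edef| + |(p - 1) * |a| ^ (p - 2) * r| :=
              abs_add_le _ _
          _ = |Edef| + (p - 1) * |a| ^ (p - 2) * |r| := by
              rw [abs_mul, abs_mul, abs_of_nonneg (by linarith : (0:ℝ) ≤ p - 1),
                abs_of_nonneg (Real.rpow_nonneg (abs_nonneg a) _)]
      -- bound on the r-term, valid for all z
      have hrterm : (p - 1) * |a| ^ (p - 2) * |r| ≤ (p - 1) * (M ^ (p - 1) * ‖z‖ ^ (p + 1)) := by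
        have h1 : |a| ^ (p - 2) ≤ M ^ (p - 2) * ‖z‖ ^ (p - 2) := by
          calc |a| ^ (p - 2) ≤ (M * ‖z‖) ^ (p - 2) :=
                Real.rpow_le_rpow (abs_nonneg a) ha (by linarith)
            _ = M ^ (p - 2) * ‖z‖ ^ (p - 2) := Real.mul_rpow hM0 (norm_nonneg z)
        have h2 : |a| ^ (p - 2) * |r| ≤ (M ^ (p - 2) * ‖z‖ ^ (p - 2)) * (M * ‖z‖ ^ 3) := by
          apply mul_le_mul h1 hr (abs_nonneg r)
          positivity
        have h3 : (M ^ (p - 2) * ‖z‖ ^ (p - 2)) * (M * ‖z‖ ^ 3)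
            = M ^ (p - 1) * ‖z‖ ^ (p + 1) := by
          rw [show M ^ (p-1) = M ^ ((p-2) + 1) by ring_nf,
            Real.rpow_add' hM0 (by linarith : (p-2) + 1 ≠ 0), Real.rpow_one,
            show ‖z‖ ^ (p+1) = ‖z‖ ^ ((p-2) + 3) by ring_nf,
            Real.rpow_add' (norm_nonneg z) (by linarith : (p-2) + (3:ℝ) ≠ 0),
            show ((3:ℝ)) = ((3:ℕ):ℝ) by norm_num, Real.rpow_natCast]
          ring
        calc (p - 1) * |a| ^ (p - 2) * |r| = (p - 1) * (|a| ^ (p - 2) * |r|) := by ring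
          _ ≤ (p - 1) * ((M ^ (p - 2) * ‖z‖ ^ (p - 2)) * (M * ‖z‖ ^ 3)) := by
              apply mul_le_mul_of_nonneg_left h2 (by linarith)
          _ = (p - 1) * (M ^ (p - 1) * ‖z‖ ^ (p + 1)) := by rw [h3]
      set X : ℝ := M ^ (p - 1) * ‖z‖ ^ (p + 1) with hXX
      have hX0 : 0 ≤ X :=
        mul_nonneg (Real.rpow_nonneg hM0 _) (Real.rpow_nonneg (norm_nonneg z) _)
      have hgoal_eq : C * M ^ (p - 1) * ‖z‖ ^ (p + 1) = C * X := by rw [hXX]; ring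
      rw [hgoal_eq]
      rcases le_or_gt ‖z‖ 1 with hz1 | hz1
      · -- small z
        have hz32 : ‖z‖ ^ 3 ≤ ‖z‖ ^ 2 :=
          pow_le_pow_of_le_one (norm_nonneg z) hz1 (by norm_num)
        have hhb : |h| ≤ 2 * M * ‖z‖ ^ 2 := by
          have hheq : h = (1/2) * q + r := by rw [hhh, hrr]; ring
          have h5 : M * ‖z‖ ^ 3 ≤ M * ‖z‖ ^ 2 := mul_le_mul_of_nonneg_left hz32 hM0
          calc |h| = |(1/2) * q + r| := by rw [hheq]
            _ ≤ |(1/2) * q| + |r| := abs_add_le _ _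
            _ = (1/2) * |q| + |r| := by rw [abs_mul]; norm_num
            _ ≤ (1/2) * (M * (‖z‖ * ‖z‖)) + M * ‖z‖ ^ 3 := by
                gcongr
            _ ≤ 2 * M * ‖z‖ ^ 2 := by
                have hzz : ‖z‖ * ‖z‖ = ‖z‖ ^ 2 := (sq ‖z‖).symm
                have hMz2 : 0 ≤ M * ‖z‖ ^ 2 := mul_nonneg hM0 (sq_nonneg _)
                rw [hzz]
                linarith
        -- |a|^(p-3) bound
        have hap3 : |a| ^ (p - 3) ≤ M ^ (p - 3) * ‖z‖ ^ (p - 3) := by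
          calc |a| ^ (p - 3) ≤ (M * ‖z‖) ^ (p - 3) :=
                Real.rpow_le_rpow (abs_nonneg a) ha (by linarith)
            _ = M ^ (p - 3) * ‖z‖ ^ (p - 3) := Real.mul_rpow hM0 (norm_nonneg z)
        have hh2 : h ^ 2 ≤ (2 * M * ‖z‖ ^ 2) ^ 2 := by
          rw [← sq_abs]
          exact pow_le_pow_left₀ (abs_nonneg h) hhb 2
        have hterm1 : |a| ^ (p - 3) * h ^ 2 ≤ 4 * X := by
          have e1 : M ^ (p - 3) * M ^ (2:ℕ) = M ^ (p - 1) := by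
            rw [← Real.rpow_natCast M 2, ← Real.rpow_add' hM0 (by push_cast; linarith)]
            congr 1
            push_cast; ring
          have e2 : ‖z‖ ^ (p - 3) * ‖z‖ ^ (4:ℕ) = ‖z‖ ^ (p + 1) := by
            rw [← Real.rpow_natCast ‖z‖ 4, ← Real.rpow_add' (norm_nonneg z) (by push_cast; linarith)]
            congr 1
            push_cast; ring
          have hmul : (M ^ (p - 3) * ‖z‖ ^ (p - 3)) * ((2 * M * ‖z‖ ^ 2) ^ 2) = 4 * X := by
            calc (M ^ (p - 3) * ‖z‖ ^ (p - 3)) * ((2 * M * ‖z‖ ^ 2) ^ 2)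
                = 4 * (M ^ (p - 3) * M ^ (2:ℕ)) * (‖z‖ ^ (p - 3) * ‖z‖ ^ (4:ℕ)) := by ring
              _ = 4 * M ^ (p - 1) * ‖z‖ ^ (p + 1) := by rw [e1, e2]
              _ = 4 * X := by rw [hXX]; ring
          rw [← hmul]
          apply mul_le_mul hap3 hh2 (by positivity)
          positivity
        have hterm2 : |h| ^ (p - 3) * h ^ 2 ≤ 2 ^ (p - 1) * X := by
          have hcollapse : |h| ^ (p - 3) * h ^ 2 = |h| ^ (p - 1) := by
            rw [← sq_abs, ← Real.rpow_natCast |h| 2,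
              ← Real.rpow_add' (abs_nonneg h) (by push_cast; linarith)]
            congr 1
            push_cast; ring
          rw [hcollapse]
          calc |h| ^ (p - 1) ≤ (2 * M * ‖z‖ ^ 2) ^ (p - 1) :=
                Real.rpow_le_rpow (abs_nonneg h) hhb (by linarith)
            _ = 2 ^ (p - 1) * M ^ (p - 1) * (‖z‖ ^ (2:ℕ)) ^ (p - 1) := by
                rw [Real.mul_rpow (by positivity) (by positivity),
                  Real.mul_rpow (by norm_num) hM0]
            _ = 2 ^ (p - 1) * M ^ (p - 1) * ‖z‖ ^ (2 * (p - 1)) := by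
                rw [← Real.rpow_natCast ‖z‖ 2, ← Real.rpow_mul (norm_nonneg z)]
                norm_cast
            _ ≤ 2 ^ (p - 1) * M ^ (p - 1) * ‖z‖ ^ (p + 1) := by
                apply mul_le_mul_of_nonneg_left _ (by positivity)
                exact Real.rpow_le_rpow_of_exponent_ge hz0 hz1 (by linarith)
            _ = 2 ^ (p - 1) * X := by rw [hXX]; ring
        have hEX : |Edef| ≤ Kp * (4 + 2 ^ (p - 1)) * X := by
          have he1 : (p - 1) * ((p - 2) * (2 ^ (p - 3) * (|a| ^ (p - 3) + |h| ^ (p - 3)))) * h ^ 2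
              = Kp * (|a| ^ (p - 3) * h ^ 2 + |h| ^ (p - 3) * h ^ 2) := by
            rw [hKp]; ring
          have he2 : |a| ^ (p - 3) * h ^ 2 + |h| ^ (p - 3) * h ^ 2 ≤ (4 + 2 ^ (p - 1)) * X := by
            linarith
          calc |Edef| ≤ Kp * (|a| ^ (p - 3) * h ^ 2 + |h| ^ (p - 3) * h ^ 2) := by
                rw [← he1]; exact hEbd
            _ ≤ Kp * ((4 + 2 ^ (p - 1)) * X) := mul_le_mul_of_nonneg_left he2 hKp0
            _ = Kp * (4 + 2 ^ (p - 1)) * X := by ring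
        calc |ψb - |a| ^ (p - 2) * a - (p - 1) / 2 * |a| ^ (p - 2) * q|
            ≤ |Edef| + (p - 1) * |a| ^ (p - 2) * |r| := habs
          _ ≤ Kp * (4 + 2 ^ (p - 1)) * X + (p - 1) * X := by linarith
          _ = (Kp * (4 + 2 ^ (p - 1)) + (p - 1)) * X := by ring
          _ ≤ C * X := by
              apply mul_le_mul_of_nonneg_right _ hX0
              rw [hC]
              have hp1 : (0:ℝ) ≤ p - 1 := by linarith
              linarith
      · -- large z
        have hz1' : (1:ℝ) ≤ ‖z‖ := hz1.le
        have hone : (1:ℝ) ≤ ‖z‖ ^ (p + 1) := by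
          calc (1:ℝ) = 1 ^ (p + 1) := (Real.one_rpow _).symm
            _ ≤ ‖z‖ ^ (p + 1) := Real.rpow_le_rpow zero_le_one hz1' (by linarith)
        have hMp : 0 ≤ M ^ (p - 1) := Real.rpow_nonneg hM0 _
        -- |ψb| bound
        have ht1 : |ψb| ≤ 2 ^ (p - 1) * X := by
          have e1 : |ψb| = |b| ^ (p - 1) := by
            rw [hψb, abs_mul, abs_of_nonneg (Real.rpow_nonneg (abs_nonneg b) _),
              show p - 1 = (p - 2) + 1 by ring,
              Real.rpow_add' (abs_nonneg b) (by linarith : (p-2) + 1 ≠ 0), Real.rpow_one]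
          rw [e1]
          calc |b| ^ (p - 1) ≤ (2 * M) ^ (p - 1) :=
                Real.rpow_le_rpow (abs_nonneg b) hb2M (by linarith)
            _ = 2 ^ (p - 1) * M ^ (p - 1) := Real.mul_rpow (by norm_num) hM0
            _ ≤ 2 ^ (p - 1) * M ^ (p - 1) * ‖z‖ ^ (p + 1) :=
                le_mul_of_one_le_right (by positivity) hone
            _ = 2 ^ (p - 1) * X := by rw [hXX]; ring
        -- |ψa| bound
        have ht2 : |(|a| ^ (p - 2) * a)| ≤ X := by
          have e1 : |(|a| ^ (p - 2) * a)| = |a| ^ (p - 1) := by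
            rw [abs_mul, abs_of_nonneg (Real.rpow_nonneg (abs_nonneg a) _),
              show p - 1 = (p - 2) + 1 by ring,
              Real.rpow_add' (abs_nonneg a) (by linarith : (p-2) + 1 ≠ 0), Real.rpow_one]
          rw [e1]
          calc |a| ^ (p - 1) ≤ (M * ‖z‖) ^ (p - 1) :=
                Real.rpow_le_rpow (abs_nonneg a) ha (by linarith)
            _ = M ^ (p - 1) * ‖z‖ ^ (p - 1) := Real.mul_rpow hM0 (norm_nonneg z)
            _ ≤ M ^ (p - 1) * ‖z‖ ^ (p + 1) := by
                apply mul_le_mul_of_nonneg_left _ hMp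
                exact Real.rpow_le_rpow_of_exponent_le hz1' (by linarith)
            _ = X := by rw [hXX]
        -- third term
        have ht3 : |(p - 1) / 2 * |a| ^ (p - 2) * q| ≤ (p - 1) / 2 * X := by
          have e1 : |(p - 1) / 2 * |a| ^ (p - 2) * q|
              = (p - 1) / 2 * (|a| ^ (p - 2) * |q|) := by
            rw [abs_mul, abs_mul, abs_of_nonneg (by linarith : (0:ℝ) ≤ (p-1)/2),
              abs_of_nonneg (Real.rpow_nonneg (abs_nonneg a) _)]
            ring
          rw [e1]
          apply mul_le_mul_of_nonneg_left _ (by linarith : (0:ℝ) ≤ (p-1)/2)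
          have h1 : |a| ^ (p - 2) ≤ M ^ (p - 2) * ‖z‖ ^ (p - 2) := by
            calc |a| ^ (p - 2) ≤ (M * ‖z‖) ^ (p - 2) :=
                  Real.rpow_le_rpow (abs_nonneg a) ha (by linarith)
              _ = M ^ (p - 2) * ‖z‖ ^ (p - 2) := Real.mul_rpow hM0 (norm_nonneg z)
          calc |a| ^ (p - 2) * |q| ≤ (M ^ (p - 2) * ‖z‖ ^ (p - 2)) * (M * (‖z‖ * ‖z‖)) := by
                apply mul_le_mul h1 hq (abs_nonneg q)
                positivity
            _ = M ^ (p - 1) * ‖z‖ ^ p := by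
                rw [show M ^ (p - 1) = M ^ ((p - 2) + 1) by ring_nf,
                  Real.rpow_add' hM0 (by linarith : (p-2) + 1 ≠ 0), Real.rpow_one,
                  show ‖z‖ ^ p = ‖z‖ ^ ((p - 2) + ((2:ℕ):ℝ)) by norm_num,
                  Real.rpow_add' (norm_nonneg z) (by push_cast; linarith), Real.rpow_natCast]
                ring
            _ ≤ M ^ (p - 1) * ‖z‖ ^ (p + 1) := by
                apply mul_le_mul_of_nonneg_left _ hMp
                exact Real.rpow_le_rpow_of_exponent_le hz1' (by linarith)
            _ = X := by rw [hXX]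
        have htri : |ψb - |a| ^ (p - 2) * a - (p - 1) / 2 * |a| ^ (p - 2) * q|
            ≤ |ψb| + |(|a| ^ (p - 2) * a)| + |(p - 1) / 2 * |a| ^ (p - 2) * q| := by
          calc |ψb - |a| ^ (p - 2) * a - (p - 1) / 2 * |a| ^ (p - 2) * q|
              ≤ |ψb - |a| ^ (p - 2) * a| + |(p - 1) / 2 * |a| ^ (p - 2) * q| := abs_sub _ _
            _ ≤ |ψb| + |(|a| ^ (p - 2) * a)| + |(p - 1) / 2 * |a| ^ (p - 2) * q| := by
                have := abs_sub ψb (|a| ^ (p - 2) * a)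
                linarith
        calc |ψb - |a| ^ (p - 2) * a - (p - 1) / 2 * |a| ^ (p - 2) * q|
            ≤ |ψb| + |(|a| ^ (p - 2) * a)| + |(p - 1) / 2 * |a| ^ (p - 2) * q| := htri
          _ ≤ 2 ^ (p - 1) * X + X + (p - 1) / 2 * X := by linarith
          _ = (2 ^ (p - 1) + 1 + (p - 1) / 2) * X := by ring
          _ ≤ C * X := by
              apply mul_le_mul_of_nonneg_right _ hX0
              rw [hC]
              have hKC : 0 ≤ Kp * (4 + 2 ^ (p - 1)) := mul_nonneg hKp0 (by linarith)
              linarith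
end

section
/- Let η : [0,∞) → [0,∞) be non-increasing with compact support, continuous and positive at 0, and let p > 1. Define σ^{(1,p)} = ∫_{ℝ^d} η(|z|) |z_d|^p dz and σ^{(1,p,1)} = ∫_{ℝ^d} η(|z|) |z_d|^{p−2} z_1² dz, where z_j denotes the j-th coordinate of z and d ≥ 2. Then σ^{(1,p)} = (p−1) σ^{(1,p,1)}. -/
open MeasureTheory Set Metric Real

namespace Stmt9Aux

lemma integral_volumeIoiPow (n : ℕ) (g : ℝ → ℝ) :
    ∫ x : Ioi (0:ℝ), g x ∂(Measure.volumeIoiPow n) = ∫ r in Ioi (0:ℝ), r ^ n * g r := by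
  simp only [Measure.volumeIoiPow, ENNReal.ofReal]
  rw [integral_withDensity_eq_integral_smul ((measurable_subtype_coe.pow_const _).real_toNNReal),
    integral_subtype_comap measurableSet_Ioi fun a : ℝ => (a ^ n).toNNReal • g a]
  refine setIntegral_congr_fun measurableSet_Ioi fun x hx => ?_
  rw [NNReal.smul_def, Real.coe_toNNReal _ (pow_nonneg (le_of_lt hx) _), smul_eq_mul]

lemma integral_norm_mul_homogeneous {E : Type*} [NormedAddCommGroup E] [NormedSpace ℝ E]
    [Nontrivial E] [MeasurableSpace E] [BorelSpace E] [FiniteDimensional ℝ E]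
    (μ : Measure E) [μ.IsAddHaarMeasure] (f : ℝ → ℝ) (Q : E → ℝ) (q : ℝ)
    (hQ : ∀ r : ℝ, 0 < r → ∀ z : E, Q (r • z) = r ^ q * Q z) :
    ∫ x, f ‖x‖ * Q x ∂μ
      = (∫ ω : sphere (0 : E) 1, Q ω ∂μ.toSphere) *
        ∫ x : Ioi (0:ℝ), f x * (x:ℝ) ^ q
          ∂(Measure.volumeIoiPow (Module.finrank ℝ E - 1)) := by
  calc
    ∫ x, f ‖x‖ * Q x ∂μ = ∫ x : ({0}ᶜ : Set E), f ‖(x:E)‖ * Q x ∂(μ.comap (↑)) := by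
      rw [integral_subtype_comap (measurableSet_singleton _).compl fun x : E => f ‖x‖ * Q x,
        restrict_compl_singleton]
    _ = ∫ y : sphere (0:E) 1 × Ioi (0:ℝ),
          f ‖(((homeomorphUnitSphereProd E).symm y : ({0}ᶜ : Set E)) : E)‖ *
            Q (((homeomorphUnitSphereProd E).symm y : ({0}ᶜ : Set E)) : E)
          ∂(μ.toSphere.prod (.volumeIoiPow (Module.finrank ℝ E - 1))) := by
      rw [← μ.measurePreserving_homeomorphUnitSphereProd.integral_comp
          (Homeomorph.measurableEmbedding _)
          (fun y => f ‖(((homeomorphUnitSphereProd E).symm y : ({0}ᶜ : Set E)) : E)‖ *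
            Q (((homeomorphUnitSphereProd E).symm y : ({0}ᶜ : Set E)) : E))]
      simp only [Homeomorph.symm_apply_apply]
    _ = ∫ y : sphere (0:E) 1 × Ioi (0:ℝ), Q y.1 * (f y.2 * (y.2:ℝ) ^ q)
          ∂(μ.toSphere.prod (.volumeIoiPow (Module.finrank ℝ E - 1))) := by
      refine integral_congr_ae (Filter.Eventually.of_forall fun y => ?_)
      obtain ⟨ω, r⟩ := y
      have hr : (0:ℝ) < r := r.2
      have hω : ‖(ω:E)‖ = 1 := mem_sphere_zero_iff_norm.mp ω.2
      simp only [homeomorphUnitSphereProd_symm_apply_coe]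
      rw [norm_smul, hω, Real.norm_eq_abs, abs_of_pos hr, mul_one, hQ r hr]
      ring
    _ = _ := integral_prod_mul (fun ω : sphere (0:E) 1 => Q ω)
          (fun r : Ioi (0:ℝ) => f r * (r:ℝ) ^ q)

lemma integral_exp_neg_sq_mul_abs_rpow {s : ℝ} (hs : -1 < s) :
    ∫ t : ℝ, Real.exp (-t ^ 2) * |t| ^ s = Real.Gamma ((s + 1) / 2) := by
  have h1 : (fun t : ℝ => Real.exp (-t ^ 2) * |t| ^ s)
      = fun t : ℝ => (fun u : ℝ => Real.exp (-u ^ 2) * u ^ s) |t| := by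
    funext t; simp [sq_abs]
  rw [h1, integral_comp_abs (f := fun u : ℝ => Real.exp (-u ^ 2) * u ^ s)]
  have h2 : ∀ x ∈ Ioi (0:ℝ), Real.exp (-x ^ 2) * x ^ s = x ^ s * Real.exp (-x ^ (2:ℝ)) := by
    intro x hx
    rw [mul_comm]
    congr 2
    rw [← Real.rpow_natCast x 2]
    norm_num
  rw [setIntegral_congr_fun measurableSet_Ioi h2,
    integral_rpow_mul_exp_neg_rpow two_pos hs]
  ring

lemma euclidean_integral_prod {d : ℕ} (g : Fin d → ℝ → ℝ) :
    ∫ z : EuclideanSpace ℝ (Fin d), ∏ i, g i (z i) = ∏ i, ∫ t : ℝ, g i t := by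
  rw [← MeasureTheory.integral_fintype_prod_eq_prod g]
  exact ((MeasurePreserving.symm (MeasurableEquiv.toLp 2 (Fin d → ℝ)).symm
    (EuclideanSpace.volume_preserving_symm_measurableEquiv_toLp (Fin d))).integral_comp'
    (fun z : EuclideanSpace ℝ (Fin d) => ∏ i, g i (z i))).symm

lemma exp_neg_norm_sq {d : ℕ} (z : EuclideanSpace ℝ (Fin d)) :
    Real.exp (-‖z‖ ^ 2) = ∏ i, Real.exp (-(z i) ^ 2) := by
  rw [← Real.exp_sum]
  congr 1
  rw [EuclideanSpace.norm_eq, Real.sq_sqrt (by positivity)]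
  simp [Real.norm_eq_abs, sq_abs]

end Stmt9Aux

/-- Let `η : [0,∞) → [0,∞)` be non-increasing, compactly supported, continuous and positive
at `0`, let `d ≥ 2` and `p > 1`. With
`σ^{(1,p)} = ∫_{ℝ^d} η(|z|)|z_d|^p dz` and `σ^{(1,p,1)} = ∫_{ℝ^d} η(|z|)|z_d|^{p−2} z_1² dz`,
one has `σ^{(1,p)} = (p−1) σ^{(1,p,1)}`. -/
theorem stmt9 (d : ℕ) (hd : 2 ≤ d) (η : ℝ → ℝ)
    (hnn : ∀ t, 0 ≤ η t) (hmono : AntitoneOn η (Set.Ici 0))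
    (hsupp : HasCompactSupport η) (hcont : ContinuousAt η 0) (hpos : 0 < η 0)
    (p : ℝ) (hp : 1 < p) :
    (∫ z : EuclideanSpace ℝ (Fin d), η ‖z‖ * |z ⟨d - 1, by omega⟩| ^ p)
      = (p - 1) *
        ∫ z : EuclideanSpace ℝ (Fin d),
          η ‖z‖ * |z ⟨d - 1, by omega⟩| ^ (p - 2) * (z ⟨0, by omega⟩) ^ 2 := by
  have hd0 : 0 < d := by omega
  set j : Fin d := ⟨d - 1, by omega⟩ with hjdef
  set i0 : Fin d := ⟨0, by omega⟩ with hi0def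
  have hji : j ≠ i0 := by
    simp only [hjdef, hi0def, Ne, Fin.mk.injEq]
    omega
  haveI : Nonempty (Fin d) := ⟨i0⟩
  haveI : Nontrivial (EuclideanSpace ℝ (Fin d)) := inferInstance
  show (∫ z : EuclideanSpace ℝ (Fin d), η ‖z‖ * |z j| ^ p)
      = (p - 1) * ∫ z : EuclideanSpace ℝ (Fin d), η ‖z‖ * |z j| ^ (p - 2) * (z i0) ^ 2
  -- homogeneity
  have hQ1 : ∀ r : ℝ, 0 < r → ∀ z : EuclideanSpace ℝ (Fin d),
      (fun z : EuclideanSpace ℝ (Fin d) => |z j| ^ p) (r • z)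
        = r ^ p * (fun z : EuclideanSpace ℝ (Fin d) => |z j| ^ p) z := by
    intro r hr z
    simp only [PiLp.smul_apply, smul_eq_mul]
    rw [abs_mul, abs_of_pos hr, Real.mul_rpow hr.le (abs_nonneg _)]
  have hQ2 : ∀ r : ℝ, 0 < r → ∀ z : EuclideanSpace ℝ (Fin d),
      (fun z : EuclideanSpace ℝ (Fin d) => |z j| ^ (p - 2) * (z i0) ^ 2) (r • z)
        = r ^ p * (fun z : EuclideanSpace ℝ (Fin d) => |z j| ^ (p - 2) * (z i0) ^ 2) z := by
    intro r hr z
    simp only [PiLp.smul_apply, smul_eq_mul]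
    rw [abs_mul, abs_of_pos hr, Real.mul_rpow hr.le (abs_nonneg _), mul_pow]
    have hrp : r ^ (p - 2) * r ^ (2:ℕ) = r ^ p := by
      rw [← Real.rpow_natCast r 2, ← Real.rpow_add hr]
      norm_num
    rw [← hrp]; ring
  have A1 := Stmt9Aux.integral_norm_mul_homogeneous
      (volume : Measure (EuclideanSpace ℝ (Fin d))) η
      (fun z : EuclideanSpace ℝ (Fin d) => |z j| ^ p) p hQ1
  have A2 := Stmt9Aux.integral_norm_mul_homogeneous
      (volume : Measure (EuclideanSpace ℝ (Fin d))) η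
      (fun z : EuclideanSpace ℝ (Fin d) => |z j| ^ (p - 2) * (z i0) ^ 2) p hQ2
  have B1 := Stmt9Aux.integral_norm_mul_homogeneous
      (volume : Measure (EuclideanSpace ℝ (Fin d))) (fun r : ℝ => Real.exp (-r ^ 2))
      (fun z : EuclideanSpace ℝ (Fin d) => |z j| ^ p) p hQ1
  have B2 := Stmt9Aux.integral_norm_mul_homogeneous
      (volume : Measure (EuclideanSpace ℝ (Fin d))) (fun r : ℝ => Real.exp (-r ^ 2))
      (fun z : EuclideanSpace ℝ (Fin d) => |z j| ^ (p - 2) * (z i0) ^ 2) p hQ2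
  simp only at A1 A2 B1 B2
  rw [show (∫ z : EuclideanSpace ℝ (Fin d), η ‖z‖ * |z j| ^ (p - 2) * (z i0) ^ 2)
      = ∫ z : EuclideanSpace ℝ (Fin d), η ‖z‖ * (|z j| ^ (p - 2) * (z i0) ^ 2) from
    integral_congr_ae (Filter.Eventually.of_forall fun z => mul_assoc _ _ _), A1, A2]
  -- Gaussian computations via Fubini
  have hsq2 : ∀ t : ℝ, |t| ^ (2:ℝ) = t ^ 2 := fun t => by
    rw [show (2:ℝ) = ((2:ℕ):ℝ) by norm_num, Real.rpow_natCast, sq_abs]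
  have hG0 : (∫ t : ℝ, Real.exp (-t ^ 2)) = Real.Gamma (1/2) := by
    have h0 := Stmt9Aux.integral_exp_neg_sq_mul_abs_rpow (s := (0:ℝ)) (by norm_num)
    simp only [Real.rpow_zero, mul_one] at h0
    rw [h0]; norm_num
  have F1 : ∀ i : Fin d, (∫ t : ℝ, Real.exp (-t ^ 2) * (if i = j then |t| ^ p else 1))
      = (if i = j then Real.Gamma ((p + 1) / 2) else Real.Gamma (1/2)) := by
    intro i
    by_cases h : i = j
    · subst h
      simp only [if_pos rfl]
      exact Stmt9Aux.integral_exp_neg_sq_mul_abs_rpow (by linarith)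
    · simp only [if_neg h, mul_one]
      exact hG0
  have P1 : (∫ z : EuclideanSpace ℝ (Fin d), Real.exp (-‖z‖ ^ 2) * |z j| ^ p)
      = Real.Gamma ((p + 1) / 2) * Real.Gamma (1/2) ^ (d - 1) := by
    have C1 : (∫ z : EuclideanSpace ℝ (Fin d), Real.exp (-‖z‖ ^ 2) * |z j| ^ p)
        = ∏ i, ∫ t : ℝ, Real.exp (-t ^ 2) * (if i = j then |t| ^ p else 1) := by
      rw [← Stmt9Aux.euclidean_integral_prod]
      refine integral_congr_ae (Filter.Eventually.of_forall fun z => ?_)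
      show Real.exp (-‖z‖ ^ 2) * |z j| ^ p
        = ∏ i, Real.exp (-(z i) ^ 2) * (if i = j then |z i| ^ p else 1)
      rw [Finset.prod_mul_distrib, ← Stmt9Aux.exp_neg_norm_sq,
        Finset.prod_ite_eq' Finset.univ j (fun i => |z i| ^ p), if_pos (Finset.mem_univ j)]
    have e1 : ∏ i : Fin d, (∫ t : ℝ, Real.exp (-t ^ 2) * (if i = j then |t| ^ p else 1))
        = ∏ i : Fin d, (if i = j then Real.Gamma ((p + 1) / 2) else Real.Gamma (1/2)) :=
      Finset.prod_congr rfl fun i _ => F1 i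
    have e2 : ∀ i ∈ Finset.univ.erase j,
        (if i = j then Real.Gamma ((p + 1) / 2) else Real.Gamma (1/2)) = Real.Gamma (1/2) :=
      fun i hi => if_neg (Finset.ne_of_mem_erase hi)
    rw [C1, e1, ← Finset.mul_prod_erase Finset.univ _ (Finset.mem_univ j),
      if_pos (rfl : j = j), Finset.prod_congr rfl e2,
      Finset.prod_const, Finset.card_erase_of_mem (Finset.mem_univ j),
      Finset.card_univ, Fintype.card_fin]
  have F2 : ∀ i : Fin d, (∫ t : ℝ, Real.exp (-t ^ 2) *
        ((if i = j then |t| ^ (p - 2) else 1) * (if i = i0 then t ^ 2 else 1)))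
      = (if i = j then Real.Gamma ((p - 1) / 2)
          else if i = i0 then Real.Gamma (3/2) else Real.Gamma (1/2)) := by
    intro i
    by_cases h : i = j
    · subst h
      simp only [eq_self_iff_true, if_true, if_neg hji, mul_one]
      have h2 := Stmt9Aux.integral_exp_neg_sq_mul_abs_rpow (s := p - 2) (by linarith)
      rw [show p - 2 + 1 = p - 1 by ring] at h2
      exact h2
    · by_cases h' : i = i0
      · subst h'
        simp only [if_neg h, eq_self_iff_true, if_true, one_mul]
        have h2 := Stmt9Aux.integral_exp_neg_sq_mul_abs_rpow (s := (2:ℝ)) (by norm_num)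
        simp only [hsq2] at h2
        rw [h2]; norm_num
      · simp only [if_neg h, if_neg h', mul_one]
        exact hG0
  have P2 : (∫ z : EuclideanSpace ℝ (Fin d),
        Real.exp (-‖z‖ ^ 2) * (|z j| ^ (p - 2) * (z i0) ^ 2))
      = Real.Gamma ((p - 1) / 2) * Real.Gamma (3/2) * Real.Gamma (1/2) ^ (d - 2) := by
    have C2 : (∫ z : EuclideanSpace ℝ (Fin d),
          Real.exp (-‖z‖ ^ 2) * (|z j| ^ (p - 2) * (z i0) ^ 2))
        = ∏ i, ∫ t : ℝ, Real.exp (-t ^ 2) *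
            ((if i = j then |t| ^ (p - 2) else 1) * (if i = i0 then t ^ 2 else 1)) := by
      rw [← Stmt9Aux.euclidean_integral_prod]
      refine integral_congr_ae (Filter.Eventually.of_forall fun z => ?_)
      show Real.exp (-‖z‖ ^ 2) * (|z j| ^ (p - 2) * (z i0) ^ 2)
        = ∏ i, Real.exp (-(z i) ^ 2) *
            ((if i = j then |z i| ^ (p - 2) else 1) * (if i = i0 then (z i) ^ 2 else 1))
      rw [Finset.prod_mul_distrib, Finset.prod_mul_distrib, ← Stmt9Aux.exp_neg_norm_sq,
        Finset.prod_ite_eq' Finset.univ j (fun i => |z i| ^ (p - 2)),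
        if_pos (Finset.mem_univ j),
        Finset.prod_ite_eq' Finset.univ i0 (fun i => (z i) ^ 2), if_pos (Finset.mem_univ i0)]
    have hi0mem : i0 ∈ Finset.univ.erase j :=
      Finset.mem_erase.mpr ⟨Ne.symm hji, Finset.mem_univ _⟩
    have e1 : ∏ i : Fin d, (∫ t : ℝ, Real.exp (-t ^ 2) *
          ((if i = j then |t| ^ (p - 2) else 1) * (if i = i0 then t ^ 2 else 1)))
        = ∏ i : Fin d, (if i = j then Real.Gamma ((p - 1) / 2)
            else if i = i0 then Real.Gamma (3/2) else Real.Gamma (1/2)) :=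
      Finset.prod_congr rfl fun i _ => F2 i
    have e2 : ∀ i ∈ (Finset.univ.erase j).erase i0,
        (if i = j then Real.Gamma ((p - 1) / 2)
          else if i = i0 then Real.Gamma (3/2) else Real.Gamma (1/2)) = Real.Gamma (1/2) :=
      fun i hi => by
        rw [if_neg (Finset.ne_of_mem_erase (Finset.mem_of_mem_erase hi)),
          if_neg (Finset.ne_of_mem_erase hi)]
    rw [C2, e1, ← Finset.mul_prod_erase Finset.univ _ (Finset.mem_univ j),
      if_pos (rfl : j = j), ← Finset.mul_prod_erase _ _ hi0mem, if_neg (Ne.symm hji),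
      if_pos (rfl : i0 = i0), Finset.prod_congr rfl e2, Finset.prod_const,
      Finset.card_erase_of_mem hi0mem, Finset.card_erase_of_mem (Finset.mem_univ j),
      Finset.card_univ, Fintype.card_fin, show d - 1 - 1 = d - 2 by omega]
    ring
  -- the radial Gaussian integral is nonzero
  have hRG : (∫ x : Ioi (0:ℝ), Real.exp (-(x:ℝ) ^ 2) * (x:ℝ) ^ p
        ∂(Measure.volumeIoiPow (Module.finrank ℝ (EuclideanSpace ℝ (Fin d)) - 1)))
      ≠ 0 := by
    set n : ℕ := Module.finrank ℝ (EuclideanSpace ℝ (Fin d)) - 1 with hn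
    have hcast : (0:ℝ) ≤ (n:ℝ) := Nat.cast_nonneg n
    have hcong : ∀ r ∈ Ioi (0:ℝ), (r:ℝ) ^ n * (Real.exp (-r ^ 2) * r ^ p)
        = r ^ (p + (n:ℝ)) * Real.exp (-r ^ (2:ℝ)) := by
      intro r hr
      rw [Real.rpow_add hr, Real.rpow_natCast,
        show (2:ℝ) = ((2:ℕ):ℝ) by norm_num, Real.rpow_natCast]
      ring
    rw [Stmt9Aux.integral_volumeIoiPow n (fun r => Real.exp (-r ^ 2) * r ^ p),
      setIntegral_congr_fun measurableSet_Ioi hcong,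
      integral_rpow_mul_exp_neg_rpow two_pos (by linarith)]
    exact ne_of_gt (mul_pos (by norm_num)
      (Real.Gamma_pos_of_pos (by positivity)))
  -- Gamma algebra
  have hg1 : Real.Gamma ((p + 1) / 2) = (p - 1) / 2 * Real.Gamma ((p - 1) / 2) := by
    have h := Real.Gamma_add_one (s := (p - 1) / 2) (ne_of_gt (by linarith))
    rw [show (p - 1) / 2 + 1 = (p + 1) / 2 by ring] at h
    exact h
  have hg2 : Real.Gamma ((3:ℝ)/2) = 1 / 2 * Real.Gamma (1/2) := by
    have h := Real.Gamma_add_one (s := (1:ℝ) / 2) (by norm_num)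
    rw [show (1:ℝ) / 2 + 1 = 3 / 2 by norm_num] at h
    exact h
  have key : (∫ ω : sphere (0 : EuclideanSpace ℝ (Fin d)) 1,
        |(ω : EuclideanSpace ℝ (Fin d)) j| ^ p
        ∂(volume : Measure (EuclideanSpace ℝ (Fin d))).toSphere)
      = (p - 1) * ∫ ω : sphere (0 : EuclideanSpace ℝ (Fin d)) 1,
        |(ω : EuclideanSpace ℝ (Fin d)) j| ^ (p - 2) * ((ω : EuclideanSpace ℝ (Fin d)) i0) ^ 2
        ∂(volume : Measure (EuclideanSpace ℝ (Fin d))).toSphere := by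
    apply mul_right_cancel₀ hRG
    calc _ = Real.Gamma ((p + 1) / 2) * Real.Gamma (1/2) ^ (d - 1) := B1.symm.trans P1
      _ = (p - 1) * (Real.Gamma ((p - 1) / 2) * Real.Gamma (3/2) * Real.Gamma (1/2) ^ (d - 2)) := by
          rw [hg1, hg2, show d - 1 = (d - 2) + 1 by omega, pow_succ]
          ring
      _ = (p - 1) * ((∫ ω : sphere (0 : EuclideanSpace ℝ (Fin d)) 1,
            |(ω : EuclideanSpace ℝ (Fin d)) j| ^ (p - 2) *
              ((ω : EuclideanSpace ℝ (Fin d)) i0) ^ 2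
            ∂(volume : Measure (EuclideanSpace ℝ (Fin d))).toSphere) *
          ∫ x : Ioi (0:ℝ), Real.exp (-(x:ℝ) ^ 2) * (x:ℝ) ^ p
            ∂(Measure.volumeIoiPow (Module.finrank ℝ (EuclideanSpace ℝ (Fin d)) - 1))) := by
          rw [B2.symm.trans P2]
      _ = _ := (mul_assoc _ _ _).symm
  rw [key]
  ring
end
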